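/- Let x₀, x₁ be positive natural numbers and x₂, x₃ natural numbers such that x₀² + x₁² = x₂², x₀·x₁ = 2·x₃², and x₀ and x₁ are coprime. Then there exist coprime positive natural numbers g and h and natural numbers e and f with x₂ > e > f > 0 such that e² + f² = g² and e² − f² = h². -/

import Mathlib

lemma nat_sq_of_coprime {a b c : ℕ} (h : Nat.Coprime a b) (heq : a * b = c ^ 2) :
    ∃ u, a = u ^ 2 := by
  apply exists_eq_pow_of_mul_eq_pow (c := c) (k := 2) _ heq
  rw [Nat.isUnit_iff]
  exact Nat.Coprime.gcd_eq_one h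

/-- The core construction, in terms of the parameters M > N. -/
lemma fermat_key (M N x2 x3 : ℕ) (hMN : Nat.Coprime M N) (hN : 0 < N) (hlt : N < M)
    (hodd : ¬ 2 ∣ (M + N)) (hx2 : M ^ 2 + N ^ 2 ≤ x2)
    (harea : M * N * ((M + N) * (M - N)) = x3 ^ 2) :
    ∃ g h e f : ℕ, 0 < g ∧ 0 < h ∧ (∀ d : ℕ, d ∣ g → d ∣ h → d = 1) ∧
      e < x2 ∧ f < e ∧ 0 < f ∧
      e ^ 2 + f ^ 2 = g ^ 2 ∧ e ^ 2 - f ^ 2 = h ^ 2 := by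
  have hle : N ≤ M := hlt.le
  -- pairwise coprimalities
  have cNadd : Nat.Coprime N (M + N) := by
    rw [Nat.coprime_add_self_right]; exact hMN.symm
  have cMadd : Nat.Coprime M (M + N) := by
    rw [add_comm, Nat.coprime_add_self_right]; exact hMN
  have cMsub : Nat.Coprime M (M - N) := by
    rw [Nat.coprime_self_sub_right hle]; exact hMN
  have cNsub : Nat.Coprime N (M - N) := by
    rw [Nat.coprime_comm, Nat.coprime_sub_self_left hle]; exact hMN
  have caddsub : Nat.Coprime (M + N) (M - N) := by
    have h2 : Nat.Coprime (Nat.gcd (M + N) (M - N)) 2 := by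
      rw [Nat.coprime_two_right, Nat.odd_iff]
      have : ¬ 2 ∣ Nat.gcd (M + N) (M - N) := fun hd =>
        hodd (hd.trans (Nat.gcd_dvd_left _ _))
      omega
    have hdM : Nat.gcd (M + N) (M - N) ∣ 2 * M := by
      have := Nat.dvd_add (Nat.gcd_dvd_left (M + N) (M - N)) (Nat.gcd_dvd_right (M + N) (M - N))
      have he : (M + N) + (M - N) = 2 * M := by omega
      rwa [he] at this
    have hdN : Nat.gcd (M + N) (M - N) ∣ 2 * N := by
      have := Nat.dvd_sub (Nat.gcd_dvd_left (M + N) (M - N)) (Nat.gcd_dvd_right (M + N) (M - N))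
      have he : (M + N) - (M - N) = 2 * N := by omega
      rwa [he] at this
    have hM' : Nat.gcd (M + N) (M - N) ∣ M := (Nat.Coprime.dvd_of_dvd_mul_left h2 hdM)
    have hN' : Nat.gcd (M + N) (M - N) ∣ N := (Nat.Coprime.dvd_of_dvd_mul_left h2 hdN)
    exact Nat.eq_one_of_dvd_one (hMN ▸ Nat.dvd_gcd hM' hN')
  -- split the square
  have cbig : Nat.Coprime (M * N) ((M + N) * (M - N)) :=
    Nat.Coprime.mul (cMadd.mul_right cMsub) (cNadd.mul_right cNsub)
  obtain ⟨u, hu⟩ := nat_sq_of_coprime cbig harea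
  obtain ⟨v, hv⟩ := nat_sq_of_coprime cbig.symm (by rw [mul_comm] at harea; exact harea)
  obtain ⟨a, ha⟩ := nat_sq_of_coprime hMN hu
  obtain ⟨b, hb⟩ := nat_sq_of_coprime hMN.symm (by rw [mul_comm] at hu; exact hu)
  obtain ⟨d, hd⟩ := nat_sq_of_coprime caddsub hv
  obtain ⟨c, hc⟩ := nat_sq_of_coprime caddsub.symm (by rw [mul_comm] at hv; exact hv)
  have hMa : M = a ^ 2 := ha
  have hNb : N = b ^ 2 := hb
  have hDd : M + N = d ^ 2 := hd
  have hCc : M - N = c ^ 2 := hc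
  refine ⟨d, c, a, b, ?_, ?_, ?_, ?_, ?_, ?_, ?_, ?_⟩
  · rcases Nat.eq_zero_or_pos d with h0 | h0
    · exfalso; rw [h0] at hDd; omega
    · exact h0
  · rcases Nat.eq_zero_or_pos c with h0 | h0
    · exfalso; rw [h0] at hCc; omega
    · exact h0
  · intro k hkd hkc
    have h1 : k ∣ M + N := hDd ▸ hkd.trans (dvd_pow_self d two_ne_zero)
    have h2 : k ∣ M - N := hCc ▸ hkc.trans (dvd_pow_self c two_ne_zero)
    exact Nat.eq_one_of_dvd_one (caddsub ▸ Nat.dvd_gcd h1 h2)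
  · have h1 : a ≤ a ^ 2 := Nat.le_self_pow two_ne_zero a
    have h2 : M ≤ M ^ 2 := Nat.le_self_pow two_ne_zero M
    have h3 : 0 < N ^ 2 := Nat.pow_pos hN
    omega
  · have : b ^ 2 < a ^ 2 := by omega
    exact lt_of_pow_lt_pow_left₀ 2 (Nat.zero_le a) this
  · rcases Nat.eq_zero_or_pos b with h0 | h0
    · exfalso; rw [h0] at hNb; omega
    · exact h0
  · omega
  · omega

lemma fermat_descend (p q x2 x3 : ℕ) (m n : ℤ)
    (hp : (p : ℤ) = m ^ 2 - n ^ 2) (hq : (q : ℤ) = 2 * m * n)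
    (hz : (x2 : ℤ) = m ^ 2 + n ^ 2 ∨ (x2 : ℤ) = -(m ^ 2 + n ^ 2))
    (hgcd : Int.gcd m n = 1) (hp0 : 0 < p) (hq0 : 0 < q)
    (hpq : Nat.Coprime p q) (harea : p * q = 2 * x3 ^ 2) :
    ∃ g h e f : ℕ, 0 < g ∧ 0 < h ∧ (∀ d : ℕ, d ∣ g → d ∣ h → d = 1) ∧
      e < x2 ∧ f < e ∧ 0 < f ∧
      e ^ 2 + f ^ 2 = g ^ 2 ∧ e ^ 2 - f ^ 2 = h ^ 2 := by
  set M := m.natAbs with hM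
  set N := n.natAbs with hN
  have eM : ((M : ℤ)) ^ 2 = m ^ 2 := Int.natAbs_sq m
  have eN : ((N : ℤ)) ^ 2 = n ^ 2 := Int.natAbs_sq n
  have hpMN : p + N ^ 2 = M ^ 2 := by
    have : (p : ℤ) + (N : ℤ) ^ 2 = (M : ℤ) ^ 2 := by rw [eM, eN]; omega
    exact_mod_cast this
  have hq' : q = 2 * M * N := by
    have := congrArg Int.natAbs hq
    simpa [Int.natAbs_mul] using this
  have hN0 : 0 < N := by
    rcases Nat.eq_zero_or_pos N with h0 | h0
    · rw [h0] at hq'; omega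
    · exact h0
  have hM0 : 0 < M := by
    rcases Nat.eq_zero_or_pos M with h0 | h0
    · rw [h0] at hq'; omega
    · exact h0
  have hlt : N < M := by
    have h2 : N ^ 2 < M ^ 2 := by omega
    exact lt_of_pow_lt_pow_left₀ 2 (Nat.zero_le M) h2
  have hx2 : M ^ 2 + N ^ 2 ≤ x2 := by
    rcases hz with hz | hz
    · have : (x2 : ℤ) = (M : ℤ) ^ 2 + (N : ℤ) ^ 2 := by rw [eM, eN]; omega
      have : x2 = M ^ 2 + N ^ 2 := by exact_mod_cast this
      omega
    · exfalso
      have h1 : (0 : ℤ) ≤ (x2 : ℤ) := Int.natCast_nonneg x2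
      have h2 : (0 : ℤ) < (N : ℤ) ^ 2 := by positivity
      have h3 : (0 : ℤ) ≤ (M : ℤ) ^ 2 := by positivity
      rw [eN] at h2
      rw [eM] at h3
      omega
  have hMN : Nat.Coprime M N := hgcd
  have hpeq : p = (M + N) * (M - N) := by
    have := Nat.sq_sub_sq M N
    omega
  have hqdvd : 2 ∣ q := ⟨M * N, by rw [hq']; ring⟩
  have hpodd : ¬ 2 ∣ p := by
    intro hdp
    have : (2 : ℕ) ∣ Nat.gcd p q := Nat.dvd_gcd hdp hqdvd
    rw [hpq] at this
    omega
  have hodd : ¬ 2 ∣ (M + N) := by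
    intro hd
    exact hpodd (hpeq ▸ hd.mul_right (M - N))
  have harea' : M * N * ((M + N) * (M - N)) = x3 ^ 2 := by
    apply Nat.eq_of_mul_eq_mul_left (show 0 < 2 by norm_num)
    calc 2 * (M * N * ((M + N) * (M - N))) = (M + N) * (M - N) * (2 * M * N) := by ring
    _ = p * q := by rw [← hpeq, ← hq']
    _ = 2 * x3 ^ 2 := harea
  exact fermat_key M N x2 x3 hMN hN0 hlt hodd hx2 harea'

theorem fermat_claim_II
    (x0 x1 x2 x3 : ℕ) (hx0 : 0 < x0) (hx1 : 0 < x1)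
    (h1 : x0 ^ 2 + x1 ^ 2 = x2 ^ 2) (h2 : x0 * x1 = 2 * x3 ^ 2)
    (hcop : ∀ d : ℕ, d ∣ x0 → d ∣ x1 → d = 1) :
    ∃ g h e f : ℕ, 0 < g ∧ 0 < h ∧ (∀ d : ℕ, d ∣ g → d ∣ h → d = 1) ∧
      e < x2 ∧ f < e ∧ 0 < f ∧
      e ^ 2 + f ^ 2 = g ^ 2 ∧ e ^ 2 - f ^ 2 = h ^ 2 := by
  have hc : Nat.Coprime x0 x1 := hcop _ (Nat.gcd_dvd_left _ _) (Nat.gcd_dvd_right _ _)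
  have ht : PythagoreanTriple (x0 : ℤ) (x1 : ℤ) (x2 : ℤ) := by
    have h1' : ((x0 : ℤ)) ^ 2 + (x1 : ℤ) ^ 2 = (x2 : ℤ) ^ 2 := by exact_mod_cast h1
    show (x0 : ℤ) * x0 + x1 * x1 = x2 * x2
    linear_combination h1'
  have hg : Int.gcd (x0 : ℤ) (x1 : ℤ) = 1 := by simpa [Int.gcd] using hc
  obtain ⟨m, n, hmn, hz, hgcd, -⟩ := PythagoreanTriple.coprime_classification.mp ⟨ht, hg⟩
  rcases hmn with ⟨hp, hq⟩ | ⟨hq, hp⟩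
  · exact fermat_descend x0 x1 x2 x3 m n hp hq hz hgcd hx0 hx1 hc h2
  · exact fermat_descend x1 x0 x2 x3 m n hp hq hz hgcd hx1 hx0 hc.symm (by rw [mul_comm]; exact h2)
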